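/- Let N ∈ ℕ and for n ∈ ℝ, i ∈ {0,…,N} let a_{n,i} ∈ ℂ with only countably many nonzero. Suppose the iterated series ∑_{n∈ℝ} ( ∑_{i=0}^{N} a_{n,i} e^{nz'} (z')^i ) converges absolutely (in the outer sum over n) for all z' in an open disk U centered at 0, and that the same holds for all the term-by-term derivatives in z'. Then for each fixed i ∈ {0,…,N}, the series ∑_{n∈ℝ} a_{n,i} e^{nz'} converges absolutely for z' ∈ U, and consequently the double series ∑_{n,i} a_{n,i} e^{nz'} (z')^i converges absolutely on U. -/

import Mathlib

open Complex Metric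

/-- if the iterated series ∑_{n∈ℝ}(∑_{i=0}^{N} a_{n,i} e^{nz'} z'^i)
converges absolutely (in the outer sum) on an open disk around 0, together with
all term-by-term derivatives in z', then each pure-exponential coefficient
series ∑_n a_{n,i} e^{nz'} converges absolutely on the disk, and hence so does
the associated double series. -/
theorem stmt_3 (N : ℕ) (a : ℝ → Fin (N + 1) → ℂ)
    (hcount : {n : ℝ | ∃ i, a n i ≠ 0}.Countable)
    (R : ℝ) (hR : 0 < R)
    (hiter : ∀ k : ℕ, ∀ z' ∈ ball (0 : ℂ) R,
      Summable fun n : ℝ =>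
        ‖iteratedDeriv k (fun w : ℂ => ∑ i : Fin (N + 1),
            a n i * Complex.exp ((n : ℂ) * w) * w ^ (i : ℕ)) z'‖) :
    (∀ i : Fin (N + 1), ∀ z' ∈ ball (0 : ℂ) R,
        Summable fun n : ℝ => ‖a n i * Complex.exp ((n : ℂ) * z')‖) ∧
    ∀ z' ∈ ball (0 : ℂ) R,
      Summable fun p : ℝ × Fin (N + 1) =>
        ‖a p.1 p.2 * Complex.exp ((p.1 : ℂ) * z') * z' ^ (p.2 : ℕ)‖ := by
  have key : ∀ i : Fin (N + 1), ∀ z' ∈ ball (0 : ℂ) R,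
      Summable fun n : ℝ => ‖a n i * Complex.exp ((n : ℂ) * z')‖ := by
    intro i z' hz'
    have hz'R : ‖z'‖ < R := by simpa [mem_ball, dist_eq_norm] using hz'
    set ε : ℝ := (R - ‖z'‖) / (N + 2) with hεdef
    have hsub : 0 < R - ‖z'‖ := by linarith
    have hεpos : 0 < ε := by positivity
    set z : Fin (N + 1) → ℂ := fun m => z' + (ε * (m : ℕ) : ℝ) * I with hzdef
    -- the points z m are in the ball
    have hzball : ∀ m : Fin (N + 1), z m ∈ ball (0 : ℂ) R := by
      intro m
      have hm : (m : ℕ) ≤ N := Nat.lt_succ_iff.mp m.isLt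
      have hm' : ((m : ℕ) : ℝ) ≤ N := by exact_mod_cast hm
      have h1 : ‖z m‖ ≤ ‖z'‖ + ε * (m : ℕ) := by
        have hn : ‖((ε * (m : ℕ) : ℝ) : ℂ) * I‖ = ε * (m : ℕ) := by
          rw [norm_mul, Complex.norm_I, mul_one, Complex.norm_real, Real.norm_eq_abs]
          exact abs_of_nonneg (by positivity)
        calc ‖z m‖ ≤ ‖z'‖ + ‖((ε * (m : ℕ) : ℝ) : ℂ) * I‖ := norm_add_le _ _
        _ = ‖z'‖ + ε * (m : ℕ) := by rw [hn]
      have h2 : ε * (m : ℕ) < R - ‖z'‖ := by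
        have : ε * ((m : ℕ) : ℝ) ≤ ε * N := by
          exact mul_le_mul_of_nonneg_left hm' hεpos.le
        have hεN : ε * (N + 2) = R - ‖z'‖ := by
          rw [hεdef, div_mul_cancel₀]; positivity
        nlinarith
      simp only [mem_ball, dist_eq_norm, sub_zero]
      linarith
    -- the points are distinct
    have hzinj : Function.Injective z := by
      intro m₁ m₂ h
      simp only [hzdef] at h
      have : ((ε * (m₁ : ℕ) : ℝ) : ℂ) * I = ((ε * (m₂ : ℕ) : ℝ) : ℂ) * I := by
        linear_combination h
      have h2 : (ε * (m₁ : ℕ) : ℝ) = (ε * (m₂ : ℕ) : ℝ) := by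
        have := mul_right_cancel₀ I_ne_zero this
        exact_mod_cast this
      have h3 : ((m₁ : ℕ) : ℝ) = ((m₂ : ℕ) : ℝ) :=
        mul_left_cancel₀ hεpos.ne' h2
      have h4 : (m₁ : ℕ) = (m₂ : ℕ) := by exact_mod_cast h3
      exact Fin.ext h4
    -- Vandermonde matrix and its inverse
    set V : Matrix (Fin (N + 1)) (Fin (N + 1)) ℂ := Matrix.vandermonde z with hVdef
    have hdet : V.det ≠ 0 := by
      rw [hVdef, Matrix.det_vandermonde_ne_zero_iff]
      exact hzinj
    have hinv : V⁻¹ * V = 1 := Matrix.nonsing_inv_mul V (Ne.isUnit hdet)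
    have hrec : ∀ n : ℝ, a n = (V⁻¹).mulVec (V.mulVec (a n)) := by
      intro n
      rw [Matrix.mulVec_mulVec, hinv, Matrix.one_mulVec]
    -- summable inner sums at the points z m
    have hg : ∀ m : Fin (N + 1), Summable fun n : ℝ =>
        ‖(∑ j : Fin (N + 1), a n j * (z m) ^ (j : ℕ)) * Complex.exp ((n : ℂ) * z m)‖ := by
      intro m
      have := hiter 0 (z m) (hzball m)
      simp only [iteratedDeriv_zero] at this
      refine this.congr fun n => ?_
      rw [Finset.sum_mul]
      congr 1
      exact Finset.sum_congr rfl fun j _ => by ring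
    -- the bound
    have hbound : ∀ n : ℝ, ‖a n i * Complex.exp ((n : ℂ) * z')‖ ≤
        ∑ m : Fin (N + 1), ‖(V⁻¹) i m‖ *
          ‖(∑ j : Fin (N + 1), a n j * (z m) ^ (j : ℕ)) * Complex.exp ((n : ℂ) * z m)‖ := by
      intro n
      have hexp : ∀ m : Fin (N + 1),
          ‖Complex.exp ((n : ℂ) * z')‖ = ‖Complex.exp ((n : ℂ) * z m)‖ := by
        intro m
        simp only [Complex.norm_exp]
        congr 1
        simp [hzdef, Complex.mul_re, Complex.add_re, Complex.add_im, mul_comm]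
      have hani : a n i = ∑ m : Fin (N + 1),
          (V⁻¹) i m * (∑ j : Fin (N + 1), a n j * (z m) ^ (j : ℕ)) := by
        conv_lhs => rw [hrec n]
        simp only [Matrix.mulVec, dotProduct, hVdef, Matrix.vandermonde,
          Matrix.of_apply]
        exact Finset.sum_congr rfl fun m _ => by
          congr 1
          exact Finset.sum_congr rfl fun j _ => mul_comm _ _
      calc ‖a n i * Complex.exp ((n : ℂ) * z')‖
          = ‖∑ m : Fin (N + 1), (V⁻¹) i m *
              ((∑ j : Fin (N + 1), a n j * (z m) ^ (j : ℕ)) * Complex.exp ((n : ℂ) * z'))‖ := by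
            rw [hani, Finset.sum_mul]
            congr 1
            exact Finset.sum_congr rfl fun m _ => by ring
        _ ≤ ∑ m : Fin (N + 1), ‖(V⁻¹) i m *
              ((∑ j : Fin (N + 1), a n j * (z m) ^ (j : ℕ)) * Complex.exp ((n : ℂ) * z'))‖ :=
            norm_sum_le _ _
        _ = ∑ m : Fin (N + 1), ‖(V⁻¹) i m‖ *
              ‖(∑ j : Fin (N + 1), a n j * (z m) ^ (j : ℕ)) * Complex.exp ((n : ℂ) * z m)‖ := by
            refine Finset.sum_congr rfl fun m _ => ?_
            rw [norm_mul, norm_mul, norm_mul, hexp m]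
    refine Summable.of_nonneg_of_le (fun n => norm_nonneg _) hbound ?_
    exact summable_sum fun m _ => (hg m).mul_left _
  refine ⟨key, ?_⟩
  intro z' hz'
  have h1 : ∀ i : Fin (N + 1),
      Summable fun n : ℝ => ‖a n i * Complex.exp ((n : ℂ) * z') * z' ^ (i : ℕ)‖ := by
    intro i
    have := Summable.mul_right ‖z' ^ (i : ℕ)‖ (key i z' hz')
    simpa [norm_mul] using this
  have h2 : Summable fun q : Fin (N + 1) × ℝ =>
      ‖a q.2 q.1 * Complex.exp ((q.2 : ℂ) * z') * z' ^ ((q.1 : Fin (N + 1)) : ℕ)‖ := by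
    rw [summable_prod_of_nonneg (fun q => norm_nonneg _)]
    exact ⟨fun i => h1 i, Summable.of_finite⟩
  exact ((Equiv.prodComm (Fin (N + 1)) ℝ).summable_iff).mp h2
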